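/- Let λ1, λ2, β, θ, m, d_T, d_I, d_V, d_E, d_c be positive real numbers and set R0 = m·β·λ1·λ2/(d_V·d_E·d_T). Let J0 be the real 5×5 matrix with rows (−d_T, 0, −β·λ1·λ2/(d_T·d_E), 0, 0), (0, −d_I, β·λ1·λ2/(d_T·d_E), 0, 0), (0, m·d_I, −d_V, 0, 0), (0, 0, −β·λ1·λ2·θ/(d_T·d_E), −d_E, 0), (0, 0, 0, 0, −d_c). Then the characteristic polynomial of J0 equals (X + d_T)(X + d_E)(X + d_c)·(X² + (d_V + d_I)X + d_I·d_V·(1 − R0)). -/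

import Mathlib

set_option maxHeartbeats 2000000

open Polynomial

theorem stmt1 (lam1 lam2 beta theta m dT dI dV dE dc : ℝ)
    (hlam1 : 0 < lam1) (hlam2 : 0 < lam2) (hbeta : 0 < beta) (htheta : 0 < theta)
    (hm : 0 < m) (hdT : 0 < dT) (hdI : 0 < dI) (hdV : 0 < dV) (hdE : 0 < dE)
    (hdc : 0 < dc)
    (R0 : ℝ) (hR0 : R0 = m * beta * lam1 * lam2 / (dV * dE * dT))
    (J0 : Matrix (Fin 5) (Fin 5) ℝ)
    (hJ0 : J0 = !![-dT, 0, -beta*lam1*lam2/(dT*dE), 0, 0;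
                   0, -dI, beta*lam1*lam2/(dT*dE), 0, 0;
                   0, m*dI, -dV, 0, 0;
                   0, 0, -beta*lam1*lam2*theta/(dT*dE), -dE, 0;
                   0, 0, 0, 0, -dc]) :
    J0.charpoly =
      (X + C dT) * (X + C dE) * (X + C dc) *
        (X ^ 2 + C (dV + dI) * X + C (dI * dV * (1 - R0))) := by
  subst hJ0 hR0
  have h : Matrix.charmatrix (!![-dT, 0, -beta*lam1*lam2/(dT*dE), 0, 0;
                   0, -dI, beta*lam1*lam2/(dT*dE), 0, 0;
                   0, m*dI, -dV, 0, 0;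
                   0, 0, -beta*lam1*lam2*theta/(dT*dE), -dE, 0;
                   0, 0, 0, 0, -dc] : Matrix (Fin 5) (Fin 5) ℝ) =
      !![X - C (-dT), 0, -C (-beta*lam1*lam2/(dT*dE)), 0, 0;
         0, X - C (-dI), -C (beta*lam1*lam2/(dT*dE)), 0, 0;
         0, -C (m*dI), X - C (-dV), 0, 0;
         0, 0, -C (-beta*lam1*lam2*theta/(dT*dE)), X - C (-dE), 0;
         0, 0, 0, 0, X - C (-dc)] := by
    ext i j
    fin_cases i <;> fin_cases j <;>
      simp [Matrix.charmatrix_apply_eq, Matrix.charmatrix_apply_ne,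
        Matrix.vecHead, Matrix.vecTail]
  rw [Matrix.charpoly, h]
  apply Polynomial.funext
  intro x
  simp [Matrix.det_succ_row_zero, Fin.sum_univ_succ, Fin.succAbove,
    Matrix.vecHead, Matrix.vecTail]
  field_simp
  ring
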